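/- Let P be an n×n real symmetric positive semidefinite matrix of rank at least r, with eigenvalues listed in decreasing order. Let X₀ be the orthogonal projection onto the span of the top r eigenvectors of P, and let X̂ be any orthogonal projection matrix of rank r_t < r. Then ⟨P², X₀ − X̂⟩ ≥ λᵣ(P)², where λᵣ(P) is the r-th largest eigenvalue of P and ⟨A,B⟩ = trace(AB). -/

import Mathlib

open Matrix BigOperators

lemma diag_nonneg_of_symm_idem {n : ℕ} (M : Matrix (Fin n) (Fin n) ℝ)
    (hsym : M.IsSymm) (hidem : M * M = M) (i : Fin n) : 0 ≤ M i i := by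
  have : M = Mᵀ * M := by rw [hsym.eq, hidem]
  rw [this, mul_apply]
  exact Finset.sum_nonneg fun k _ => by simp [transpose_apply]; exact mul_self_nonneg _

lemma trace_eq_rank_of_symm_idem {n : ℕ} (X : Matrix (Fin n) (Fin n) ℝ)
    (hsym : X.IsSymm) (hidem : X * X = X) : X.trace = (X.rank : ℝ) := by
  have hH : X.IsHermitian := by
    rw [Matrix.IsHermitian, conjTranspose]
    ext i j; simpa using congrFun (congrFun hsym.eq i) j
  have hU := (Matrix.mem_unitaryGroup_iff).mp (hH.eigenvectorUnitary).2
  have hU' := (Matrix.mem_unitaryGroup_iff').mp (hH.eigenvectorUnitary).2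
  have hdiag : star (hH.eigenvectorUnitary : Matrix (Fin n) (Fin n) ℝ) * X * (hH.eigenvectorUnitary : Matrix (Fin n) (Fin n) ℝ)
      = diagonal (RCLike.ofReal ∘ hH.eigenvalues) := by
    rw [← Unitary.conjStarAlgAut_star_apply (S := ℝ)]; exact hH.conjStarAlgAut_star_eigenvectorUnitary
  set U := (hH.eigenvectorUnitary : Matrix (Fin n) (Fin n) ℝ)
  have hdiag2 : star U * X * U = diagonal hH.eigenvalues := by
    rw [hdiag]; congr 1
  have hdd : diagonal hH.eigenvalues * diagonal hH.eigenvalues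
      = diagonal hH.eigenvalues := by
    conv_lhs => rw [← hdiag2]
    calc (star U * X * U) * (star U * X * U) = star U * (X * (U * star U) * X) * U := by
          noncomm_ring
      _ = star U * X * U := by rw [hU, mul_one, hidem]
      _ = diagonal hH.eigenvalues := hdiag2
  have h01 : ∀ i, hH.eigenvalues i * hH.eigenvalues i = hH.eigenvalues i := by
    intro i
    have := congrFun (congrFun hdd i) i
    simpa [Matrix.diagonal_mul_diagonal, Matrix.diagonal_apply_eq] using this
  have htr : X.trace = ∑ i, hH.eigenvalues i := by
    conv_lhs => rw [hH.spectral_theorem, Unitary.conjStarAlgAut_apply]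
    rw [Matrix.trace_mul_cycle, hU', one_mul, Matrix.trace_diagonal]
    simp
  rw [htr, hH.rank_eq_card_non_zero_eigs]
  rw [Fintype.card_subtype, Finset.card_filter]
  push_cast
  apply Finset.sum_congr rfl
  intro i _
  have h2 : hH.eigenvalues i * (hH.eigenvalues i - 1) = 0 := by nlinarith [h01 i]
  rcases mul_eq_zero.mp h2 with h | h
  · simp [h]
  · have h3 : hH.eigenvalues i = 1 := by linarith
    simp [h3]

theorem stmt6 {n r rt : ℕ} (hr : 0 < r) (hrn : r ≤ n) (hrt : rt < r)
    (P : Matrix (Fin n) (Fin n) ℝ) (hP : P.PosSemidef) (hrank : r ≤ P.rank)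
    (Q : Matrix (Fin n) (Fin n) ℝ) (d : Fin n → ℝ)
    (hQ : Qᵀ * Q = 1) (hd : Antitone d) (hdnonneg : ∀ i, 0 ≤ d i)
    (hdecomp : P = Q * Matrix.diagonal d * Qᵀ)
    (X0 : Matrix (Fin n) (Fin n) ℝ)
    (hX0 : X0 = Q * Matrix.diagonal (fun i : Fin n => if (i : ℕ) < r then (1 : ℝ) else 0) * Qᵀ)
    (Xhat : Matrix (Fin n) (Fin n) ℝ)
    (hsym : Xhat.IsSymm) (hidem : Xhat * Xhat = Xhat)
    (hrankX : Xhat.rank = rt) :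
    ((P * P) * (X0 - Xhat)).trace ≥ (d ⟨r - 1, by omega⟩) ^ 2 := by
  have hQQ : Q * Qᵀ = 1 := mul_eq_one_comm.mp hQ
  set e : Fin n → ℝ := fun i => d i ^ 2 with he
  have henn : ∀ i, 0 ≤ e i := fun i => sq_nonneg _
  have heanti : Antitone e := fun i j hij => by
    have h1 := hd hij; have h2 := hdnonneg j; have h3 := hdnonneg i
    simp only [he]; nlinarith
  -- M and its properties
  set M := Qᵀ * Xhat * Q with hM
  have hMsym : M.IsSymm := by
    rw [Matrix.IsSymm, hM]
    simp only [Matrix.transpose_mul, Matrix.transpose_transpose, hsym.eq, Matrix.mul_assoc]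
  have hMidem : M * M = M := by
    have h : M * M = Qᵀ * (Xhat * ((Q * Qᵀ) * (Xhat * Q))) := by
      simp only [hM, Matrix.mul_assoc]
    rw [h, hQQ, Matrix.one_mul, ← Matrix.mul_assoc Xhat, hidem, hM, Matrix.mul_assoc]
  have hM0 : ∀ i, 0 ≤ M i i := diag_nonneg_of_symm_idem M hMsym hMidem
  have hOneMsym : (1 - M).IsSymm := by
    rw [Matrix.IsSymm, Matrix.transpose_sub, Matrix.transpose_one, hMsym.eq]
  have hOneMidem : (1 - M) * (1 - M) = 1 - M := by
    rw [sub_mul, one_mul, mul_sub, mul_one, hMidem]; abel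
  have hM1 : ∀ i, M i i ≤ 1 := by
    intro i
    have h := diag_nonneg_of_symm_idem (1 - M) hOneMsym hOneMidem i
    simp only [Matrix.sub_apply, Matrix.one_apply_eq] at h
    linarith
  have hXtr : Xhat.trace = (rt : ℝ) := by
    rw [trace_eq_rank_of_symm_idem Xhat hsym hidem, hrankX]
  have hMtr : M.trace = (rt : ℝ) := by
    rw [hM, Matrix.trace_mul_cycle, hQQ, Matrix.one_mul, hXtr]
  have hMtr' : ∑ i, M i i = (rt : ℝ) := hMtr
  -- collapse lemma
  have collapse : ∀ F : Matrix (Fin n) (Fin n) ℝ, Qᵀ * (Q * F * Qᵀ) * Q = F := by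
    intro F
    have h : Qᵀ * (Q * F * Qᵀ) * Q = (Qᵀ * Q) * (F * (Qᵀ * Q)) := by
      simp only [Matrix.mul_assoc]
    rw [h, hQ, Matrix.one_mul, Matrix.mul_one]
  have tconj : ∀ A B : Matrix (Fin n) (Fin n) ℝ,
      ((Q * A * Qᵀ) * B).trace = (A * (Qᵀ * B * Q)).trace := by
    intro A B
    have h : (Q * A * Qᵀ) * B = Q * (A * (Qᵀ * B)) := by simp only [Matrix.mul_assoc]
    rw [h, Matrix.trace_mul_comm]
    congr 1
    simp only [Matrix.mul_assoc]
  -- P * P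
  have hPP : P * P = Q * Matrix.diagonal e * Qᵀ := by
    rw [hdecomp]
    have h : (Q * Matrix.diagonal d * Qᵀ) * (Q * Matrix.diagonal d * Qᵀ)
        = Q * (Matrix.diagonal d * ((Qᵀ * Q) * (Matrix.diagonal d * Qᵀ))) := by
      simp only [Matrix.mul_assoc]
    rw [h, hQ, Matrix.one_mul, ← Matrix.mul_assoc (Matrix.diagonal d),
      Matrix.diagonal_mul_diagonal]
    have hdd : (fun i => d i * d i) = e := by funext i; simp [he, sq]
    rw [hdd, Matrix.mul_assoc]
  -- trace with X0
  have t0 : ((P * P) * X0).trace = ∑ i, e i * (if (i : ℕ) < r then (1:ℝ) else 0) := by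
    rw [hPP, hX0, tconj, collapse, Matrix.diagonal_mul_diagonal, Matrix.trace_diagonal]
  -- trace with Xhat
  have t1 : ((P * P) * Xhat).trace = ∑ i, e i * M i i := by
    rw [hPP, tconj, ← hM, Matrix.trace]
    apply Finset.sum_congr rfl
    intro i _
    simp [Matrix.diag, Matrix.mul_apply, Matrix.diagonal_apply, Finset.sum_ite_eq]
  have tsplit : ((P * P) * (X0 - Xhat)).trace
      = (∑ i, e i * (if (i : ℕ) < r then (1:ℝ) else 0)) - ∑ i, e i * M i i := by
    rw [Matrix.mul_sub, Matrix.trace_sub, t0, t1]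
  rw [tsplit]
  -- finset setup
  set S : Finset (Fin n) := Finset.univ.filter (fun i => (i : ℕ) < rt) with hSdef
  set T : Finset (Fin n) := Finset.univ.filter (fun i => (i : ℕ) < r) with hTdef
  have hsum0 : ∑ i, e i * (if (i : ℕ) < r then (1:ℝ) else 0) = ∑ i ∈ T, e i := by
    rw [hTdef, Finset.sum_filter]
    apply Finset.sum_congr rfl
    intro i _
    by_cases h : (i : ℕ) < r <;> simp [h]
  have hScard : S.card = rt := by
    have hEq : S = Finset.Iio (⟨rt, by omega⟩ : Fin n) := by
      ext i; simp [hSdef, Fin.lt_def]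
    rw [hEq, Fin.card_Iio]
  set c : ℝ := e ⟨rt, by omega⟩ with hc
  have step1 : ∑ i, e i * M i i ≤ ∑ i ∈ S, e i := by
    have pt : ∀ i : Fin n, e i * M i i
        ≤ (if (i : ℕ) < rt then e i - c else 0) + c * M i i := by
      intro i
      by_cases h : (i : ℕ) < rt
      · have hec : c ≤ e i := heanti (by simpa [Fin.le_def] using h.le)
        have := hM1 i
        simp only [h, if_pos]
        nlinarith
      · have hec : e i ≤ c := heanti (by simp [Fin.le_def]; omega)
        have := hM0 i
        simp only [h, if_neg, not_false_iff]
        nlinarith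
    calc ∑ i, e i * M i i ≤ ∑ i : Fin n, ((if (i : ℕ) < rt then e i - c else 0) + c * M i i) :=
          Finset.sum_le_sum fun i _ => pt i
      _ = (∑ i ∈ S, (e i - c)) + c * ∑ i, M i i := by
          rw [Finset.sum_add_distrib, ← Finset.mul_sum, Finset.sum_filter]
      _ = (∑ i ∈ S, e i) - S.card * c + c * rt := by
          rw [Finset.sum_sub_distrib, Finset.sum_const, hMtr', nsmul_eq_mul]
      _ = ∑ i ∈ S, e i := by rw [hScard]; ring
  have hST : S ⊆ T := by
    intro i hi
    simp only [hSdef, hTdef, Finset.mem_filter, Finset.mem_univ, true_and] at *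
    omega
  have hmem : (⟨r - 1, by omega⟩ : Fin n) ∈ T \ S := by
    simp only [hSdef, hTdef, Finset.mem_sdiff, Finset.mem_filter, Finset.mem_univ, true_and]
    omega
  have step2 : (∑ i ∈ S, e i) + e ⟨r - 1, by omega⟩ ≤ ∑ i ∈ T, e i := by
    have hsplit : ∑ i ∈ T, e i = (∑ i ∈ S, e i) + ∑ i ∈ T \ S, e i := by
      rw [← Finset.sum_union (Finset.disjoint_sdiff), Finset.union_sdiff_of_subset hST]
    rw [hsplit]
    have : e ⟨r - 1, by omega⟩ ≤ ∑ i ∈ T \ S, e i :=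
      Finset.single_le_sum (fun i _ => henn i) hmem
    linarith
  rw [hsum0]
  have : (d ⟨r - 1, by omega⟩ : ℝ) ^ 2 = e ⟨r - 1, by omega⟩ := rfl
  rw [ge_iff_le, this]
  linarith
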